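/- Fix distinct a₁₂, a₂₁ ∈ ℂ with a₂₁ ≠ 0, r > 0, and s > 0 with a₂₁ e^{2sr} ≠ a₁₂. Define Q₁(ζ) = ζ - a₁₂ + a₁₂(a₂₁ - a₁₂)/(a₂₁ e^{2sr} - a₁₂) and Q₂(ζ) = ζ(a₂₁ - a₁₂)/(a₂₁ e^{sr} - a₁₂ e^{-sr}). Then Q₁ is monic of degree 1, Q₂(0) = 0, and the matching conditions Q₁(a₁₂) = e^{-sr} Q₂(a₁₂) and Q₂(a₂₁) = e^{-sr} Q₁(a₂₁) hold. -/

import Mathlib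

open Complex

theorem n2_first_basis_element (a12 a21 : ℂ) (hne : a12 ≠ a21) (ha21 : a21 ≠ 0)
    (r s : ℝ) (hr : 0 < r) (hs : 0 < s)
    (hden : a21 * Real.exp (2 * s * r) ≠ a12)
    (Q₁ Q₂ : ℂ → ℂ)
    (hQ₁ : ∀ ζ, Q₁ ζ = ζ - a12 + a12 * (a21 - a12) / (a21 * Real.exp (2 * s * r) - a12))
    (hQ₂ : ∀ ζ, Q₂ ζ = ζ * (a21 - a12) /
      (a21 * Real.exp (s * r) - a12 * Real.exp (-(s * r)))) :
    (∃ b : ℂ, ∀ ζ, Q₁ ζ = ζ + b) ∧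
    Q₂ 0 = 0 ∧
    Q₁ a12 = Real.exp (-(s * r)) * Q₂ a12 ∧
    Q₂ a21 = Real.exp (-(s * r)) * Q₁ a21 := by
  set E : ℂ := (Real.exp (s * r) : ℂ) with hE
  set F : ℂ := (Real.exp (-(s * r)) : ℂ) with hF
  have hEF : E * F = 1 := by
    rw [hE, hF]
    norm_cast
    rw [← Real.exp_add]
    simp
  have h2 : (Real.exp (2 * s * r) : ℂ) = E * E := by
    rw [hE]
    norm_cast
    rw [← Real.exp_add]
    ring_nf
  have hD1 : a21 * (Real.exp (2 * s * r) : ℂ) - a12 ≠ 0 := sub_ne_zero.mpr hden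
  have hE0 : E ≠ 0 := by
    intro h; rw [h] at hEF; simp at hEF
  have hFe : F = E⁻¹ := (inv_eq_of_mul_eq_one_right hEF).symm
  have hD1' : a21 * E ^ 2 - a12 ≠ 0 := by
    rw [show a21 * E ^ 2 - a12 = a21 * (E * E) - a12 by ring, ← h2]; exact hD1
  have hD1'' : -a12 + a21 * E ^ 2 ≠ 0 := fun h => hD1' (by linear_combination h)
  have hD2 : a21 * E - a12 * F ≠ 0 := by
    rw [hFe]
    intro h
    apply hD1'
    rw [sub_eq_zero]
    field_simp at h
    linear_combination h
  refine ⟨⟨-a12 + a12 * (a21 - a12) / (a21 * Real.exp (2 * s * r) - a12), fun ζ => by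
    rw [hQ₁]; ring⟩, by rw [hQ₂]; simp, ?_, ?_⟩
  all_goals rw [hQ₁, hQ₂, h2, show a21 * (E * E) - a12 = a21 * E ^ 2 - a12 from by ring]
  all_goals rw [hFe] at hD2 ⊢
  all_goals field_simp [hD1', hD1'']
  · ring
  · ring
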